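/- Satisfiability via translation: A sentential first-order standpoint logic formula φ in standpoint standard normal form is satisfiable if and only if the first-order formula Trans_{|φ|}(φ) is satisfiable, where |φ| is the number of subformulas of φ. -/

import Mathlib

namespace FOSL

/-- Standpoint expressions: e ::= * | s | e∪e | e∩e | e∖e -/
inductive SE (S : Type) : Type
  | star : SE S
  | sym : S → SE S
  | union : SE S → SE S → SE S
  | inter : SE S → SE S → SE S
  | diff : SE S → SE S → SE S

/-- FOSL formulas over predicates `P` (with arities `ar`), constants `C`,
standpoint symbols `S`; variables are natural numbers. -/
inductive Fm (P : Type) (ar : P → ℕ) (C : Type) (S : Type) : Type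
  | atom : (p : P) → (Fin (ar p) → C ⊕ ℕ) → Fm P ar C S
  | eq : (C ⊕ ℕ) → (C ⊕ ℕ) → Fm P ar C S
  | neg : Fm P ar C S → Fm P ar C S
  | conj : Fm P ar C S → Fm P ar C S → Fm P ar C S
  | all : ℕ → Fm P ar C S → Fm P ar C S
  | box : SE S → Fm P ar C S → Fm P ar C S

variable {P : Type} {ar : P → ℕ} {C S : Type}

def Fm.disj (φ ψ : Fm P ar C S) : Fm P ar C S := .neg (.conj (.neg φ) (.neg ψ))
def Fm.impl (φ ψ : Fm P ar C S) : Fm P ar C S := .neg (.conj φ (.neg ψ))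
def Fm.ex (x : ℕ) (φ : Fm P ar C S) : Fm P ar C S := .neg (.all x (.neg φ))
def Fm.dia (e : SE S) (φ : Fm P ar C S) : Fm P ar C S := .neg (.box e (.neg φ))

/-- First-order standpoint structures (constant domain, rigid constants). -/
structure Model (P : Type) (ar : P → ℕ) (C : Type) (S : Type) : Type 1 where
  Dom : Type
  dom_ne : Nonempty Dom
  Prec : Type
  prec_ne : Nonempty Prec
  σ : S → Set Prec
  interpP : Prec → (p : P) → (Fin (ar p) → Dom) → Prop
  interpC : C → Dom

/-- Homomorphic extension of σ to standpoint expressions, with σ(*) = Π. -/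
def Model.σE (M : Model P ar C S) : SE S → Set M.Prec
  | .star => Set.univ
  | .sym s => M.σ s
  | .union e1 e2 => M.σE e1 ∪ M.σE e2
  | .inter e1 e2 => M.σE e1 ∩ M.σE e2
  | .diff e1 e2 => M.σE e1 \ M.σE e2

def Model.termVal (M : Model P ar C S) (v : ℕ → M.Dom) : C ⊕ ℕ → M.Dom
  | .inl c => M.interpC c
  | .inr x => v x

/-- Satisfaction `M, π, v ⊨ φ`. -/
def Model.sat (M : Model P ar C S) : M.Prec → (ℕ → M.Dom) → Fm P ar C S → Prop
  | π, v, .atom p ts => M.interpP π p fun i => M.termVal v (ts i)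
  | _, v, .eq t1 t2 => M.termVal v t1 = M.termVal v t2
  | π, v, .neg φ => ¬ M.sat π v φ
  | π, v, .conj φ ψ => M.sat π v φ ∧ M.sat π v ψ
  | π, v, .all x φ => ∀ δ : M.Dom, M.sat π (Function.update v x δ) φ
  | _, v, .box e φ => ∀ π' ∈ M.σE e, M.sat π' v φ

/-- `M ⊨ φ`: satisfaction at all precisifications and assignments. -/
def Model.satM (M : Model P ar C S) (φ : Fm P ar C S) : Prop :=
  ∀ (π : M.Prec) (v : ℕ → M.Dom), M.sat π v φ

def tmVars : C ⊕ ℕ → Finset ℕ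
  | .inl _ => ∅
  | .inr x => {x}

/-- Free variables. -/
def Fm.fv : Fm P ar C S → Finset ℕ
  | .atom _ ts => Finset.univ.biUnion fun i => tmVars (ts i)
  | .eq t1 t2 => tmVars t1 ∪ tmVars t2
  | .neg φ => φ.fv
  | .conj φ ψ => φ.fv ∪ ψ.fv
  | .all x φ => φ.fv.erase x
  | .box _ φ => φ.fv

/-- Sentential: in every subformula □_e ψ, ψ has no free variables. -/
def Fm.sentential : Fm P ar C S → Prop
  | .atom _ _ => True
  | .eq _ _ => True
  | .neg φ => φ.sentential
  | .conj φ ψ => φ.sentential ∧ ψ.sentential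
  | .all _ φ => φ.sentential
  | .box _ φ => φ.fv = ∅ ∧ φ.sentential

/-- Set of subformulas. -/
def Fm.Sub : Fm P ar C S → Set (Fm P ar C S)
  | .atom p ts => {.atom p ts}
  | .eq t1 t2 => {.eq t1 t2}
  | .neg φ => insert (.neg φ) φ.Sub
  | .conj φ ψ => insert (.conj φ ψ) (φ.Sub ∪ ψ.Sub)
  | .all x φ => insert (.all x φ) φ.Sub
  | .box e φ => insert (.box e φ) φ.Sub

/-- |φ| = number of subformulas of φ. -/
noncomputable def Fm.size (φ : Fm P ar C S) : ℕ := φ.Sub.ncard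

def satisfiable (φ : Fm P ar C S) : Prop := ∃ M : Model P ar C S, M.satM φ

/-- n-satisfiable: has a model with exactly n precisifications. -/
def nsatisfiable (n : ℕ) (φ : Fm P ar C S) : Prop :=
  ∃ M : Model P ar C S, M.satM φ ∧ Nat.card M.Prec = n

def Fm.boxfree : Fm P ar C S → Prop
  | .atom _ _ => True
  | .eq _ _ => True
  | .neg φ => φ.boxfree
  | .conj φ ψ => φ.boxfree ∧ ψ.boxfree
  | .all _ φ => φ.boxfree
  | .box _ _ => False

/-- Standpoint standard normal form: no nested modalities. -/
def Fm.ssnf : Fm P ar C S → Prop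
  | .atom _ _ => True
  | .eq _ _ => True
  | .neg φ => φ.ssnf
  | .conj φ ψ => φ.ssnf ∧ ψ.ssnf
  | .all _ φ => φ.ssnf
  | .box _ φ => φ.boxfree

/-- Restriction of a standpoint structure to a nonempty subset of precisifications. -/
def Model.restrict (M : Model P ar C S) (Ps : Set M.Prec) (h : Ps.Nonempty) :
    Model P ar C S where
  Dom := M.Dom
  dom_ne := M.dom_ne
  Prec := Ps
  prec_ne := h.to_subtype
  σ := fun s => {π : Ps | (π : M.Prec) ∈ M.σ s}
  interpP := fun π => M.interpP π
  interpC := M.interpC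

/-! ### Plain first-order logic -/

inductive FO (Q : Type) (arQ : Q → ℕ) (C : Type) : Type
  | tt
  | atom (q : Q) (ts : Fin (arQ q) → C ⊕ ℕ)
  | eq (t1 t2 : C ⊕ ℕ)
  | neg (φ : FO Q arQ C)
  | conj (φ ψ : FO Q arQ C)
  | all (x : ℕ) (φ : FO Q arQ C)

variable {Q : Type} {arQ : Q → ℕ}

def FO.impl (φ ψ : FO Q arQ C) : FO Q arQ C := .neg (.conj φ (.neg ψ))

def FO.conjList : List (FO Q arQ C) → FO Q arQ C
  | [] => .tt
  | φ :: l => .conj φ (FO.conjList l)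

structure FOModel (Q : Type) (arQ : Q → ℕ) (C : Type) : Type 1 where
  Dom : Type
  dom_ne : Nonempty Dom
  interp : (q : Q) → (Fin (arQ q) → Dom) → Prop
  interpC : C → Dom

def FOModel.termVal (I : FOModel Q arQ C) (v : ℕ → I.Dom) : C ⊕ ℕ → I.Dom
  | .inl c => I.interpC c
  | .inr x => v x

def FOModel.sat (I : FOModel Q arQ C) : (ℕ → I.Dom) → FO Q arQ C → Prop
  | _, .tt => True
  | v, .atom q ts => I.interp q fun i => I.termVal v (ts i)
  | v, .eq t1 t2 => I.termVal v t1 = I.termVal v t2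
  | v, .neg φ => ¬ I.sat v φ
  | v, .conj φ ψ => I.sat v φ ∧ I.sat v ψ
  | v, .all x φ => ∀ δ : I.Dom, I.sat (Function.update v x δ) φ

def FOModel.satM (I : FOModel Q arQ C) (φ : FO Q arQ C) : Prop := ∀ v, I.sat v φ

def fosatisfiable (φ : FO Q arQ C) : Prop := ∃ I : FOModel Q arQ C, I.satM φ

/-! ### Translation to plain FO -/

/-- Translated vocabulary: a predicate P_π for each P and π, and nullary
predicates s_π (for `some s`) and *_π (for `none`). -/
abbrev TQ (P S Pre : Type) : Type := (P × Pre) ⊕ (Option S × Pre)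

def tAr (ar : P → ℕ) {S Pre : Type} : TQ P S Pre → ℕ
  | .inl (p, _) => ar p
  | .inr _ => 0

variable {Pre : Type}

/-- trans_E(π, e). -/
def transE (π : Pre) : SE S → FO (TQ P S Pre) (tAr ar) C
  | .star => .atom (.inr (none, π)) Fin.elim0
  | .sym s => .atom (.inr (some s, π)) Fin.elim0
  | .union e1 e2 => .neg (.conj (.neg (transE π e1)) (.neg (transE π e2)))
  | .inter e1 e2 => .conj (transE π e1) (transE π e2)
  | .diff e1 e2 => .conj (transE π e1) (.neg (transE π e2))

/-- trans_n(π, φ). -/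
noncomputable def transF [Fintype Pre] (π : Pre) : Fm P ar C S → FO (TQ P S Pre) (tAr ar) C
  | .atom p ts => .atom (.inl (p, π)) ts
  | .eq t1 t2 => .eq t1 t2
  | .neg φ => .neg (transF π φ)
  | .conj φ ψ => .conj (transF π φ) (transF π ψ)
  | .all x φ => .all x (transF π φ)
  | .box e φ =>
      FO.conjList ((Finset.univ.toList).map fun π' : Pre =>
        FO.impl (transE π' e) (transF π' φ))

/-- Trans_n(φ) = ⋀_π trans_n(π, φ) ∧ ⋀_π *_π. -/
noncomputable def TransN [Fintype Pre] (φ : Fm P ar C S) : FO (TQ P S Pre) (tAr ar) C :=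
  .conj (FO.conjList ((Finset.univ.toList).map fun π : Pre => transF π φ))
        (FO.conjList ((Finset.univ.toList).map fun π : Pre =>
          FO.atom (.inr (none, π)) Fin.elim0))

/-- The plain first-order structure I_M associated with a standpoint structure M. -/
def Model.toFO (M : Model P ar C S) : FOModel (TQ P S M.Prec) (tAr ar) C where
  Dom := M.Dom
  dom_ne := M.dom_ne
  interp := fun q => match q with
    | .inl (p, π) => fun args => M.interpP π p args
    | .inr (none, _) => fun _ => True
    | .inr (some s, π) => fun _ => π ∈ M.σ s
  interpC := M.interpC


/-! ### Auxiliary lemmas -/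

lemma fin0_fun_eq {α : Sort _} {n : ℕ} (h : n = 0) (f g : Fin n → α) : f = g := by
  subst h; funext i; exact i.elim0

lemma Fm.mem_Sub_self (φ : Fm P ar C S) : φ ∈ φ.Sub := by
  cases φ <;> simp [Fm.Sub]

lemma Fm.Sub_finite (φ : Fm P ar C S) : φ.Sub.Finite := by
  induction φ with
  | atom p ts => exact Set.finite_singleton _
  | eq t1 t2 => exact Set.finite_singleton _
  | neg φ ih => exact ih.insert _
  | conj φ ψ ih1 ih2 => exact (ih1.union ih2).insert _
  | all x φ ih => exact ih.insert _
  | box e φ ih => exact ih.insert _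

lemma Fm.size_pos (φ : Fm P ar C S) : 0 < φ.size :=
  (Set.ncard_pos φ.Sub_finite).mpr ⟨φ, φ.mem_Sub_self⟩

lemma termVal_agree (M : Model P ar C S) {v v' : ℕ → M.Dom} (t : C ⊕ ℕ)
    (h : ∀ x ∈ tmVars (C := C) t, v x = v' x) : M.termVal v t = M.termVal v' t := by
  cases t with
  | inl c => rfl
  | inr x => exact h x (by simp [tmVars])

lemma sat_agree (M : Model P ar C S) (φ : Fm P ar C S) :
    ∀ (π : M.Prec) (v v' : ℕ → M.Dom), (∀ x ∈ φ.fv, v x = v' x) →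
      (M.sat π v φ ↔ M.sat π v' φ) := by
  induction φ with
  | atom p ts =>
      intro π v v' h
      simp only [Model.sat]
      have hts : (fun i => M.termVal v (ts i)) = fun i => M.termVal v' (ts i) := by
        funext i
        exact termVal_agree M (ts i) fun x hx =>
          h x (by simp only [Fm.fv, Finset.mem_biUnion]; exact ⟨i, Finset.mem_univ i, hx⟩)
      rw [hts]
  | eq t1 t2 =>
      intro π v v' h
      simp only [Model.sat]
      rw [termVal_agree M t1 fun x hx => h x (by simp [Fm.fv, hx]),
          termVal_agree M t2 fun x hx => h x (by simp [Fm.fv, hx])]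
  | neg φ ih => intro π v v' h; simp only [Model.sat]; rw [ih π v v' h]
  | conj φ ψ ih1 ih2 =>
      intro π v v' h
      simp only [Model.sat]
      rw [ih1 π v v' fun x hx => h x (by simp [Fm.fv, hx]),
          ih2 π v v' fun x hx => h x (by simp [Fm.fv, hx])]
  | all x φ ih =>
      intro π v v' h
      simp only [Model.sat]
      refine forall_congr' fun δ => ih π _ _ fun y hy => ?_
      rcases eq_or_ne y x with rfl | hne
      · simp
      · rw [Function.update_of_ne hne, Function.update_of_ne hne]
        exact h y (by simp only [Fm.fv, Finset.mem_erase]; exact ⟨hne, hy⟩)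
  | box e φ ih =>
      intro π v v' h
      simp only [Model.sat]
      exact forall_congr' fun π' => imp_congr_right fun _ => ih π' v v' h

lemma sat_closed (M : Model P ar C S) {φ : Fm P ar C S} (hc : φ.fv = ∅)
    (π : M.Prec) (v v' : ℕ → M.Dom) : M.sat π v φ ↔ M.sat π v' φ :=
  sat_agree M φ π v v' (by simp [hc])

/-! ### Pullback models -/

def Model.pull (M : Model P ar C S) (A : Type) (ne : Nonempty A) (g : A → M.Prec) :
    Model P ar C S where
  Dom := M.Dom
  dom_ne := M.dom_ne
  Prec := A
  prec_ne := ne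
  σ := fun s => g ⁻¹' M.σ s
  interpP := fun a => M.interpP (g a)
  interpC := M.interpC

lemma Model.pull_σE (M : Model P ar C S) (A : Type) (ne : Nonempty A)
    (g : A → M.Prec) (e : SE S) :
    (M.pull A ne g).σE e = g ⁻¹' M.σE e := by
  induction e with
  | star => rfl
  | sym s => rfl
  | union e1 e2 ih1 ih2 => simp [Model.σE, ih1, ih2, Set.preimage_union]; rfl
  | inter e1 e2 ih1 ih2 => simp [Model.σE, ih1, ih2, Set.preimage_inter]; rfl
  | diff e1 e2 ih1 ih2 => simp [Model.σE, ih1, ih2, Set.preimage_diff]; rfl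

lemma pull_sat_boxfree (M : Model P ar C S) {A : Type} {ne : Nonempty A}
    {g : A → M.Prec} :
    ∀ {φ : Fm P ar C S}, φ.boxfree →
      ∀ (a : A) (v : ℕ → M.Dom), (M.pull A ne g).sat a v φ ↔ M.sat (g a) v φ := by
  intro φ
  induction φ with
  | atom p ts => intro _ a v; exact Iff.rfl
  | eq t1 t2 => intro _ a v; exact Iff.rfl
  | neg φ ih => intro hb a v; simp only [Model.sat]; rw [ih hb a v]
  | conj φ ψ ih1 ih2 =>
      intro hb a v; simp only [Model.sat]; rw [ih1 hb.1 a v, ih2 hb.2 a v]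
  | all x φ ih =>
      intro hb a v; simp only [Model.sat]
      exact forall_congr' fun δ => ih hb a _
  | box e φ ih => intro hb; exact hb.elim

lemma pull_sat (M : Model P ar C S) {A : Type} {ne : Nonempty A} {g : A → M.Prec}
    (v₀ : ℕ → M.Dom) :
    ∀ {φ : Fm P ar C S}, φ.sentential → φ.ssnf →
    (∀ e ψ, Fm.box e ψ ∈ φ.Sub →
      (¬ ∀ π' ∈ M.σE e, M.sat π' v₀ ψ) → ∃ a, g a ∈ M.σE e ∧ ¬ M.sat (g a) v₀ ψ) →
    ∀ (a : A) (v : ℕ → M.Dom), (M.pull A ne g).sat a v φ ↔ M.sat (g a) v φ := by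
  intro φ
  induction φ with
  | atom p ts => intro _ _ _ a v; exact Iff.rfl
  | eq t1 t2 => intro _ _ _ a v; exact Iff.rfl
  | neg φ ih =>
      intro hs hn H a v
      simp only [Model.sat]
      rw [ih hs hn (fun e ψ h => H e ψ (Set.mem_insert_iff.mpr (Or.inr h))) a v]
  | conj φ ψ ih1 ih2 =>
      intro hs hn H a v
      simp only [Model.sat]
      rw [ih1 hs.1 hn.1
            (fun e χ h => H e χ (Set.mem_insert_iff.mpr (Or.inr (Or.inl h)))) a v,
          ih2 hs.2 hn.2
            (fun e χ h => H e χ (Set.mem_insert_iff.mpr (Or.inr (Or.inr h)))) a v]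
  | all x φ ih =>
      intro hs hn H a v
      simp only [Model.sat]
      exact forall_congr' fun δ =>
        ih hs hn (fun e χ h => H e χ (Set.mem_insert_iff.mpr (Or.inr h))) a _
  | box e ψ ih =>
      intro hs hn H a v
      simp only [Model.sat]
      have hσ := Model.pull_σE M A ne g e
      constructor
      · intro h π' hπ'
        by_contra hcon
        have hne' : ¬ ∀ π'' ∈ M.σE e, M.sat π'' v₀ ψ := fun hall =>
          hcon ((sat_closed M hs.1 π' v₀ v).mp (hall π' hπ'))
        obtain ⟨a', ha1, ha2⟩ := H e ψ (Set.mem_insert _ _) hne'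
        have hsat' := h a' (by rw [hσ]; exact ha1)
        have hsat2 := (pull_sat_boxfree (A := A) (ne := ne) (g := g) M hn a' v).mp hsat'
        exact ha2 ((sat_closed M hs.1 (g a') v v₀).mp hsat2)
      · intro h a' ha'
        exact (pull_sat_boxfree (A := A) (ne := ne) (g := g) M hn a' v).mpr
          (h (g a') (by rw [hσ] at ha'; exact ha'))

/-! ### Correspondence lemmas -/

lemma sat_conjList {Q : Type} {arQ : Q → ℕ} (I : FOModel Q arQ C) (v : ℕ → I.Dom)
    (l : List (FO Q arQ C)) :
    I.sat v (FO.conjList l) ↔ ∀ ψ ∈ l, I.sat v ψ := by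
  induction l with
  | nil => simp [FO.conjList, FOModel.sat]
  | cons χ l ih => simp [FO.conjList, FOModel.sat, ih]

lemma toFO_termVal (M : Model P ar C S) (v : ℕ → M.Dom) (t : C ⊕ ℕ) :
    M.toFO.termVal v t = M.termVal v t := by cases t <;> rfl

lemma toFO_transE (M : Model P ar C S) (v : ℕ → M.Dom) (e : SE S) (π : M.Prec) :
    M.toFO.sat v (transE (ar := ar) (C := C) π e) ↔ π ∈ M.σE e := by
  induction e with
  | star =>
      simp only [transE, Model.σE, Set.mem_univ, iff_true]
      exact trivial
  | sym s => exact Iff.rfl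
  | union e1 e2 ih1 ih2 =>
      simp only [transE, FOModel.sat, Model.σE, Set.mem_union, ih1, ih2]; tauto
  | inter e1 e2 ih1 ih2 =>
      simp only [transE, FOModel.sat, Model.σE, Set.mem_inter_iff, ih1, ih2]
  | diff e1 e2 ih1 ih2 =>
      simp only [transE, FOModel.sat, Model.σE, Set.mem_diff, ih1, ih2]

lemma toFO_transF (M : Model P ar C S) [Fintype M.Prec] (φ : Fm P ar C S) :
    ∀ (π : M.Prec) (v : ℕ → M.Dom), M.toFO.sat v (transF π φ) ↔ M.sat π v φ := by
  induction φ with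
  | atom p ts =>
      intro π v
      simp only [transF, FOModel.sat, Model.sat, toFO_termVal]
      exact Iff.rfl
  | eq t1 t2 =>
      intro π v
      simp only [transF, FOModel.sat, Model.sat, toFO_termVal]; exact Iff.rfl
  | neg φ ih => intro π v; simp only [transF, FOModel.sat, Model.sat, ih]
  | conj φ ψ ih1 ih2 =>
      intro π v; simp only [transF, FOModel.sat, Model.sat, ih1, ih2]
  | all x φ ih =>
      intro π v; simp only [transF, FOModel.sat, Model.sat]
      exact forall_congr' fun δ => ih π _
  | box e ψ ih =>
      intro π v
      simp only [transF, Model.sat]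
      refine (sat_conjList M.toFO v _).trans ?_
      constructor
      · intro h π' hπ'
        have h2 := h _ (List.mem_map.mpr
          ⟨π', Finset.mem_toList.mpr (Finset.mem_univ π'), rfl⟩)
        simp only [FO.impl, FOModel.sat, not_and, not_not] at h2
        exact (ih π' v).mp (h2 ((toFO_transE M v e π').mpr hπ'))
      · intro h χ hχ
        obtain ⟨π', -, rfl⟩ := List.mem_map.mp hχ
        simp only [FO.impl, FOModel.sat, not_and, not_not]
        intro he
        exact (ih π' v).mpr (h π' ((toFO_transE M v e π').mp he))

lemma toFO_TransN (M : Model P ar C S) [Fintype M.Prec] (φ : Fm P ar C S)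
    (h : M.satM φ) : M.toFO.satM (TransN (Pre := M.Prec) φ) := by
  intro v
  refine ⟨?_, ?_⟩
  · rw [sat_conjList]
    intro ψ hψ
    obtain ⟨π, -, rfl⟩ := List.mem_map.mp hψ
    exact (toFO_transF M φ π v).mpr (h π v)
  · rw [sat_conjList]
    intro ψ hψ
    obtain ⟨π, -, rfl⟩ := List.mem_map.mp hψ
    exact trivial

/-! ### From FO models back to standpoint models -/

lemma sat_atom0 {Q : Type} {arQ : Q → ℕ} (I : FOModel Q arQ C) {q : Q}
    (h : arQ q = 0) (ts : Fin (arQ q) → C ⊕ ℕ) (v v' : ℕ → I.Dom) :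
    I.sat v (.atom q ts) ↔ I.sat v' (.atom q ts) := by
  simp only [FOModel.sat]
  rw [fin0_fun_eq h (fun i => I.termVal v (ts i)) (fun i => I.termVal v' (ts i))]

noncomputable def MofI {Pre : Type} (ne : Nonempty Pre)
    (I : FOModel (TQ P S Pre) (tAr ar) C) : Model P ar C S where
  Dom := I.Dom
  dom_ne := I.dom_ne
  Prec := Pre
  prec_ne := ne
  σ := fun s => {π | I.sat (fun _ => Classical.choice I.dom_ne)
      (.atom (.inr (some s, π)) Fin.elim0)}
  interpP := fun π p args => I.interp (.inl (p, π)) args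
  interpC := I.interpC

lemma MofI_termVal {Pre : Type} (ne : Nonempty Pre)
    (I : FOModel (TQ P S Pre) (tAr ar) C) (v : ℕ → I.Dom) (t : C ⊕ ℕ) :
    (MofI (P := P) (ar := ar) (S := S) ne I).termVal v t = I.termVal v t := by
  cases t <;> rfl

lemma MofI_transE {Pre : Type} (ne : Nonempty Pre)
    (I : FOModel (TQ P S Pre) (tAr ar) C)
    (hstar : ∀ (π : Pre) (v : ℕ → I.Dom),
      I.sat v (.atom (.inr (none, π)) Fin.elim0))
    (v : ℕ → I.Dom) (e : SE S) (π : Pre) :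
    I.sat v (transE (ar := ar) (C := C) π e) ↔ π ∈ (MofI ne I).σE e := by
  induction e with
  | star =>
      simp only [transE, Model.σE, Set.mem_univ, iff_true]
      exact iff_of_true (hstar π v) trivial
  | sym s =>
      simp only [transE, Model.σE, MofI, Set.mem_setOf_eq]
      exact sat_atom0 (q := Sum.inr (some s, π)) I rfl Fin.elim0 v _
  | union e1 e2 ih1 ih2 =>
      simp only [transE, FOModel.sat, Model.σE, Set.mem_union, ih1, ih2]
      exact Iff.trans (by tauto) (Set.mem_union _ _ _).symm
  | inter e1 e2 ih1 ih2 =>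
      simp only [transE, FOModel.sat, Model.σE, Set.mem_inter_iff, ih1, ih2]
      exact (Set.mem_inter_iff _ _ _).symm
  | diff e1 e2 ih1 ih2 =>
      simp only [transE, FOModel.sat, Model.σE, Set.mem_diff, ih1, ih2]
      exact (Set.mem_diff _).symm

lemma MofI_transF {Pre : Type} [Fintype Pre] (ne : Nonempty Pre)
    (I : FOModel (TQ P S Pre) (tAr ar) C)
    (hstar : ∀ (π : Pre) (v : ℕ → I.Dom),
      I.sat v (.atom (.inr (none, π)) Fin.elim0))
    (φ : Fm P ar C S) :
    ∀ (π : Pre) (v : ℕ → I.Dom), I.sat v (transF π φ) ↔ (MofI ne I).sat π v φ := by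
  induction φ with
  | atom p ts =>
      intro π v
      simp only [transF, FOModel.sat, Model.sat, MofI_termVal]
      exact Iff.rfl
  | eq t1 t2 =>
      intro π v
      simp only [transF, FOModel.sat, Model.sat, MofI_termVal]; exact Iff.rfl
  | neg φ ih => intro π v; simp only [transF, FOModel.sat, Model.sat, ih]
  | conj φ ψ ih1 ih2 =>
      intro π v; simp only [transF, FOModel.sat, Model.sat, ih1, ih2]
  | all x φ ih =>
      intro π v; simp only [transF, FOModel.sat, Model.sat]
      exact forall_congr' fun δ => ih π _
  | box e ψ ih =>
      intro π v
      simp only [transF, Model.sat]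
      rw [sat_conjList]
      constructor
      · intro h π' hπ'
        have h2 := h _ (List.mem_map.mpr
          ⟨π', Finset.mem_toList.mpr (@Finset.mem_univ Pre _ π'), rfl⟩)
        simp only [FO.impl, FOModel.sat, not_and, not_not] at h2
        exact (ih π' v).mp (h2 ((MofI_transE ne I hstar v e π').mpr hπ'))
      · intro h χ hχ
        obtain ⟨π', -, rfl⟩ := List.mem_map.mp hχ
        simp only [FO.impl, FOModel.sat, not_and, not_not]
        intro he
        exact (ih π' v).mpr (h π' ((MofI_transE ne I hstar v e π').mp he))

/-- Satisfiability via translation: a sentential SSNF formula φ is satisfiable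
iff Trans_{|φ|}(φ) is satisfiable in first-order logic, with |φ| the number of
subformulas of φ. -/
theorem sat_iff_transN_sat (P : Type) (ar : P → ℕ) (C S : Type)
    (φ : Fm P ar C S) (hs : φ.sentential) (hn : φ.ssnf) :
    satisfiable φ ↔
      fosatisfiable (TransN (Pre := Fin φ.size) (ar := ar) (S := S) φ) := by
  have hpos : 0 < φ.size := φ.size_pos
  constructor
  · rintro ⟨M, hM⟩
    obtain ⟨d₀⟩ := M.dom_ne
    obtain ⟨π₀⟩ := M.prec_ne
    let v₀ : ℕ → M.Dom := fun _ => d₀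
    let B : Set (SE S × Fm P ar C S) :=
      {b | Fm.box b.1 b.2 ∈ φ.Sub ∧ ¬ ∀ π' ∈ M.σE b.1, M.sat π' v₀ b.2}
    have hinj : Function.Injective (fun b : SE S × Fm P ar C S => Fm.box b.1 b.2) := by
      rintro ⟨e1, ψ1⟩ ⟨e2, ψ2⟩ h
      injection h with h1 h2
      subst h1; subst h2; rfl
    have himg : (fun b : SE S × Fm P ar C S => Fm.box b.1 b.2) '' B ⊆ φ.Sub := by
      rintro _ ⟨b, hb, rfl⟩; exact hb.1
    have hBfin : B.Finite :=
      Set.Finite.of_finite_image (φ.Sub_finite.subset himg) hinj.injOn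
    have hBcard : B.ncard ≤ φ.size := by
      rw [← Set.ncard_image_of_injective B hinj]
      exact Set.ncard_le_ncard himg φ.Sub_finite
    haveI : Fintype B := hBfin.fintype
    have hcardeq : B.ncard = Fintype.card B := by
      rw [Set.ncard_eq_toFinset_card', Set.toFinset_card]
    have hm : Fintype.card B ≤ φ.size := hcardeq ▸ hBcard
    let eqv := Fintype.equivFin B
    have hwit : ∀ b : B, ∃ π', π' ∈ M.σE (b : SE S × Fm P ar C S).1 ∧
        ¬ M.sat π' v₀ (b : SE S × Fm P ar C S).2 := by
      rintro ⟨⟨e, ψ⟩, hb⟩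
      have h2 := hb.2
      push_neg at h2
      obtain ⟨π', h1, h2⟩ := h2
      exact ⟨π', h1, h2⟩
    let f : Fin φ.size → M.Prec := fun i =>
      if h : (i : ℕ) < Fintype.card B then (hwit (eqv.symm ⟨i, h⟩)).choose else π₀
    have H : ∀ e ψ, Fm.box e ψ ∈ φ.Sub → (¬ ∀ π' ∈ M.σE e, M.sat π' v₀ ψ) →
        ∃ a, f a ∈ M.σE e ∧ ¬ M.sat (f a) v₀ ψ := by
      intro e ψ h1 h2
      have hb : (e, ψ) ∈ B := ⟨h1, h2⟩
      set j := eqv ⟨(e, ψ), hb⟩ with hj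
      refine ⟨⟨(j : ℕ), lt_of_lt_of_le j.isLt hm⟩, ?_⟩
      have hf : f ⟨(j : ℕ), lt_of_lt_of_le j.isLt hm⟩
          = (hwit ⟨(e, ψ), hb⟩).choose := by
        show (if h : (j : ℕ) < Fintype.card B
            then (hwit (eqv.symm ⟨(j : ℕ), h⟩)).choose else π₀) = _
        rw [dif_pos j.isLt]
        have h3 : eqv.symm ⟨(j : ℕ), j.isLt⟩ = ⟨(e, ψ), hb⟩ := by
          have h4 : (⟨(j : ℕ), j.isLt⟩ : Fin (Fintype.card B)) = j := rfl
          rw [h4, hj, Equiv.symm_apply_apply]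
        rw [h3]
      rw [hf]
      exact ⟨(hwit ⟨(e, ψ), hb⟩).choose_spec.1, (hwit ⟨(e, ψ), hb⟩).choose_spec.2⟩
    let M' := M.pull (Fin φ.size) ⟨⟨0, hpos⟩⟩ f
    have hM' : M'.satM φ := fun a v => (pull_sat M v₀ hs hn H a v).mpr (hM (f a) v)
    exact ⟨M'.toFO, @toFO_TransN P ar C S M' (Fin.fintype φ.size) φ hM'⟩
  · rintro ⟨I, hI⟩
    have ne : Nonempty (Fin φ.size) := ⟨⟨0, hpos⟩⟩
    have hstar : ∀ (π : Fin φ.size) (v : ℕ → I.Dom),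
        I.sat v (.atom (.inr (none, π)) Fin.elim0) := by
      intro π v
      have h2 := (hI v).2
      rw [sat_conjList] at h2
      exact h2 _ (List.mem_map.mpr
        ⟨π, Finset.mem_toList.mpr (Finset.mem_univ π), rfl⟩)
    refine ⟨MofI ne I, ?_⟩
    intro π v
    have h1 := (hI v).1
    replace h1 := (sat_conjList I v _).mp h1
    exact (MofI_transF (Pre := Fin φ.size) ne I hstar φ π v).mp
      (h1 _ (List.mem_map.mpr
        ⟨π, Finset.mem_toList.mpr (@Finset.mem_univ (Fin φ.size) _ π), rfl⟩))

end FOSL
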